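/- Let k ∈ ℕ, ε > 0, Δ > 0, and let s₁,…,s_k ∈ ℝ with OPT = minᵢ sᵢ. Let π be the probability distribution on [k] with π(i) ∝ exp(-ε·sᵢ/(2Δ)). Then for every β ∈ (0,1], the probability under π that s_î ≤ OPT + (2Δ/ε)·log(k/β) is at least 1 - β. -/

import Mathlib

open Finset

/-- Utility of the exponential mechanism: with probability at least `1 - β`, the sampled
candidate's score is within `(2Δ/ε)·log(k/β)` of the optimum. -/
theorem stmt_16 (k : ℕ) (hk : 0 < k) (ε Δ β : ℝ) (hε : 0 < ε) (hΔ : 0 < Δ)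
    (hβ : β ∈ Set.Ioc (0 : ℝ) 1) (s : Fin k → ℝ) :
    1 - β ≤ ∑ i ∈ univ.filter (fun i : Fin k =>
        s i ≤ (⨅ j : Fin k, s j) + (2 * Δ / ε) * Real.log (k / β)),
      Real.exp (-(ε * s i) / (2 * Δ)) / ∑ j, Real.exp (-(ε * s j) / (2 * Δ)) := by
  obtain ⟨hβ0, hβ1⟩ := hβ
  have hΔ2 : (0:ℝ) < 2 * Δ := by linarith
  set c := ε / (2 * Δ) with hc
  have hc0 : 0 < c := div_pos hε hΔ2
  have hk0 : (0:ℝ) < (k:ℝ) := Nat.cast_pos.mpr hk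
  have hne : Nonempty (Fin k) := ⟨⟨0, hk⟩⟩
  set OPT := ⨅ j : Fin k, s j with hOPT
  have hbdd : BddBelow (Set.range s) := Set.Finite.bddBelow (Set.finite_range s)
  obtain ⟨i₀, hi₀⟩ := Finite.exists_min s
  have hOPTle : s i₀ ≤ OPT := le_ciInf hi₀
  set Z := ∑ j, Real.exp (-(ε * s j) / (2 * Δ)) with hZ
  have hZpos : 0 < Z :=
    Finset.sum_pos (fun j _ => Real.exp_pos _) ⟨i₀, mem_univ _⟩
  have hexp : ∀ x : ℝ, Real.exp (-(ε * x) / (2 * Δ)) = Real.exp (-(c * x)) := by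
    intro x
    congr 1
    field_simp [hc]
    rw [hc]; field_simp
  have hZge : Real.exp (-(c * OPT)) ≤ Z := by
    calc Real.exp (-(c * OPT)) ≤ Real.exp (-(ε * s i₀) / (2 * Δ)) := by
          rw [hexp]
          exact Real.exp_le_exp.mpr (by nlinarith)
      _ ≤ Z := Finset.single_le_sum (f := fun j => Real.exp (-(ε * s j) / (2 * Δ)))
          (fun j _ => (Real.exp_pos _).le) (mem_univ i₀)
  set t := OPT + (2 * Δ / ε) * Real.log ((k:ℝ) / β) with ht
  have hbad : ∀ i : Fin k, ¬ (s i ≤ t) →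
      Real.exp (-(ε * s i) / (2 * Δ)) ≤ Real.exp (-(c * OPT)) * (β / k) := by
    intro i hi
    push_neg at hi
    rw [hexp]
    have h1 : Real.exp (-(c * s i)) ≤ Real.exp (-(c * t)) :=
      Real.exp_le_exp.mpr (by nlinarith)
    have h2 : -(c * t) = -(c * OPT) + Real.log (β / k) := by
      have hlog : Real.log (β / k) = - Real.log ((k:ℝ) / β) := by
        rw [← Real.log_inv]
        congr 1
        field_simp
      rw [hlog, ht, hc]
      field_simp
      ring
    rw [h2, Real.exp_add, Real.exp_log (div_pos hβ0 hk0)] at h1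
    exact h1
  -- bound on the bad sum
  set P := fun i : Fin k => s i ≤ t with hP
  have hbadsum : ∑ i ∈ univ.filter (fun i => ¬ P i), Real.exp (-(ε * s i) / (2 * Δ))
      ≤ β * Z := by
    calc ∑ i ∈ univ.filter (fun i => ¬ P i), Real.exp (-(ε * s i) / (2 * Δ))
        ≤ ∑ _i ∈ univ.filter (fun i => ¬ P i), Real.exp (-(c * OPT)) * (β / k) := by
          apply Finset.sum_le_sum
          intro i hi
          exact hbad i (by simpa [hP] using (Finset.mem_filter.mp hi).2)
      _ = (univ.filter (fun i => ¬ P i)).card * (Real.exp (-(c * OPT)) * (β / k)) := by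
          rw [Finset.sum_const, nsmul_eq_mul]
      _ ≤ (k:ℝ) * (Real.exp (-(c * OPT)) * (β / k)) := by
          apply mul_le_mul_of_nonneg_right
          · exact_mod_cast (Finset.card_filter_le _ _).trans_eq (by simp)
          · positivity
      _ = β * Real.exp (-(c * OPT)) := by field_simp
      _ ≤ β * Z := by nlinarith
  have hsplit : ∑ i ∈ univ.filter P, Real.exp (-(ε * s i) / (2 * Δ))
      + ∑ i ∈ univ.filter (fun i => ¬ P i), Real.exp (-(ε * s i) / (2 * Δ)) = Z :=
    Finset.sum_filter_add_sum_filter_not _ _ _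
  have key : (1 - β) * Z ≤ ∑ i ∈ univ.filter P, Real.exp (-(ε * s i) / (2 * Δ)) := by
    nlinarith
  rw [← Finset.sum_div]
  rw [le_div_iff₀ hZpos]
  nlinarith
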